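/- Let k be a field and n ≥ 1. The k(t)[a]-module k(t)[a]/(a−t)^n, restricted along the inclusion k[a] ⊂ k(t)[a], is isomorphic as a k[a]-module to a direct sum of n copies of k(a), the field of rational functions viewed as a k[a]-module. Consequently its k[a]-endomorphism ring is isomorphic to the ring of n×n matrices over k(a), of dimension n² over k(a). -/

import Mathlib

/- STATEMENT 1: L = k(t)[a]/(a-t)^n, restricted along k[a] ⊂ k(t)[a], is
isomorphic as a k[a]-module to a direct sum of n copies of k(a); consequently
End_{k[a]}(L) ≅ Mₙ(k(a)), which has dimension n² over k(a). -/

open Polynomial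

section Stmt1Aux

variable (k : Type) [Field k]

/-- The inclusion k[a] → k(t)[a]. -/
noncomputable def auxφ : Polynomial k →+* Polynomial (RatFunc k) :=
  mapRingHom (algebraMap k (RatFunc k))

lemma aux_eval (y : Polynomial k) :
    eval RatFunc.X (auxφ k y) = algebraMap (Polynomial k) (RatFunc k) y := by
  have h : (evalRingHom (RatFunc.X : RatFunc k)).comp (auxφ k)
      = algebraMap (Polynomial k) (RatFunc k) := by
    apply ringHom_ext
    · intro a; simp [auxφ, RatFunc.algebraMap_C, RatFunc.algebraMap_eq_C]
    · simp [auxφ, RatFunc.algebraMap_X]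
  exact congrFun (congrArg (fun f => f.toFun) h) y

variable (I : Ideal (Polynomial (RatFunc k)))

noncomputable def auxg : Polynomial k →+* (Polynomial (RatFunc k) ⧸ I) :=
  (Ideal.Quotient.mk I).comp (auxφ k)

/-- Hypothesis: every nonzero polynomial of k[a] maps to a unit in the quotient. -/
def UnitHyp : Prop := ∀ y : nonZeroDivisors (Polynomial k), IsUnit (auxg k I y)

variable {k I}

/-- Type synonym for the quotient, carrying the k(a)-module structure coming from
the lift of `auxg` to the fraction field. -/
def Lpsi (_hu : UnitHyp k I) : Type := Polynomial (RatFunc k) ⧸ I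

variable (hu : UnitHyp k I)

noncomputable instance : CommRing (Lpsi hu) :=
  inferInstanceAs (CommRing (Polynomial (RatFunc k) ⧸ I))

/-- The lifted map k(a) → L. -/
noncomputable def psi : RatFunc k →+* Lpsi hu :=
  (IsLocalization.lift (S := RatFunc k) (M := nonZeroDivisors (Polynomial k)) hu :
    RatFunc k →+* (Polynomial (RatFunc k) ⧸ I))

noncomputable instance : Module (RatFunc k) (Lpsi hu) := Module.compHom _ (psi hu)

noncomputable def mkq : Polynomial (RatFunc k) →+* Lpsi hu := Ideal.Quotient.mk I

lemma psi_alg (y : Polynomial k) :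
    psi hu (algebraMap (Polynomial k) (RatFunc k) y) = mkq hu (auxφ k y) :=
  IsLocalization.lift_eq hu y

lemma Lpsi.smul_def (c : RatFunc k) (x : Lpsi hu) : c • x = psi hu c * x := rfl

lemma mkq_surjective : Function.Surjective (mkq hu) :=
  Ideal.Quotient.mk_surjective

variable {n : ℕ}

lemma aux_mem (hI : I = Ideal.span {(X - C RatFunc.X) ^ n}) (f : Polynomial (RatFunc k)) :
    f ∈ I ↔ (X - C RatFunc.X) ^ n ∣ f := by
  rw [hI, Ideal.mem_span_singleton]

lemma mkq_eq_zero (hI : I = Ideal.span {(X - C RatFunc.X) ^ n}) (f : Polynomial (RatFunc k)) :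
    mkq hu f = 0 ↔ (X - C RatFunc.X) ^ n ∣ f :=
  Iff.trans (Ideal.Quotient.eq_zero_iff_mem) (aux_mem hI f)

/-- The residue map L → k(a), evaluation at t. -/
noncomputable def rho (hn : 1 ≤ n) (hI : I = Ideal.span {(X - C RatFunc.X) ^ n}) :
    Lpsi hu →+* RatFunc k :=
  (Ideal.Quotient.lift I (evalRingHom RatFunc.X) (fun f hf => by
    obtain ⟨u, rfl⟩ := (aux_mem hI f).mp hf
    simp only [coe_evalRingHom, eval_mul, eval_pow, eval_sub, eval_X, eval_C, sub_self]
    rw [zero_pow (by omega), zero_mul]) :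
    (Polynomial (RatFunc k) ⧸ I) →+* RatFunc k)

variable (hn : 1 ≤ n) (hI : I = Ideal.span {(X - C RatFunc.X) ^ n})

include hn hI

lemma rho_mkq (f : Polynomial (RatFunc k)) : rho hu hn hI (mkq hu f) = eval RatFunc.X f := rfl

lemma rho_psi (c : RatFunc k) : rho hu hn hI (psi hu c) = c := by
  have h : (rho hu hn hI).comp (psi hu) = RingHom.id (RatFunc k) := by
    apply IsLocalization.ringHom_ext (nonZeroDivisors (Polynomial k))
    refine RingHom.ext fun y => ?_
    simp only [RingHom.comp_apply, RingHom.id_apply]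
    rw [psi_alg]
    calc rho hu hn hI (mkq hu (auxφ k y)) = eval RatFunc.X (auxφ k y) := rho_mkq hu hn hI _
      _ = algebraMap (Polynomial k) (RatFunc k) y := aux_eval k y
  exact congrFun (congrArg (fun f => f.toFun) h) c

lemma rho_ker (x : Lpsi hu) (hx : rho hu hn hI x = 0) :
    ∃ y : Lpsi hu, x = mkq hu (X - C RatFunc.X) * y := by
  obtain ⟨f, rfl⟩ := mkq_surjective hu x
  have hr : IsRoot f RatFunc.X := hx
  obtain ⟨u, rfl⟩ := dvd_iff_isRoot.mpr hr
  exact ⟨mkq hu u, by rw [map_mul]⟩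

/-- The basis vectors: powers of (a - t). -/
noncomputable def bv : Fin n → Lpsi hu := fun i => mkq hu (X - C RatFunc.X) ^ (i : ℕ)

omit hn in
lemma pow_zero_of_le (m : ℕ) (hm : n ≤ m) : (mkq hu (X - C RatFunc.X)) ^ m = 0 := by
  rw [← map_pow, mkq_eq_zero hu hI]
  exact pow_dvd_pow _ hm

lemma pow_ne_zero' : (mkq hu (X - C RatFunc.X)) ^ (n - 1) ≠ 0 := by
  rw [← map_pow, Ne, mkq_eq_zero hu hI,
    pow_dvd_pow_iff (X_sub_C_ne_zero (RatFunc.X : RatFunc k))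
      (irreducible_X_sub_C (RatFunc.X : RatFunc k)).not_isUnit]
  omega

lemma bv_span : Submodule.span (RatFunc k) (Set.range (bv hu (n := n))) = ⊤ := by
  have aux : ∀ m j : ℕ, n ≤ j + m → ∀ x : Lpsi hu,
      (mkq hu (X - C RatFunc.X)) ^ j * x
        ∈ Submodule.span (RatFunc k) (Set.range (bv hu (n := n))) := by
    intro m
    induction m with
    | zero =>
      intro j hj x
      rw [pow_zero_of_le hu hI j (by omega), zero_mul]
      exact Submodule.zero_mem _
    | succ m ih =>
      intro j hj x
      by_cases hjn : n ≤ j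
      · rw [pow_zero_of_le hu hI j hjn, zero_mul]; exact Submodule.zero_mem _
      · push_neg at hjn
        set c : RatFunc k := rho hu hn hI x with hc
        have h0 : rho hu hn hI (x - psi hu c) = 0 := by rw [map_sub, rho_psi]; ring
        obtain ⟨y, hy⟩ := rho_ker hu hn hI _ h0
        have hx : (mkq hu (X - C RatFunc.X)) ^ j * x
            = c • bv hu ⟨j, hjn⟩ + (mkq hu (X - C RatFunc.X)) ^ (j + 1) * y := by
          have hxx : x = psi hu c + mkq hu (X - C RatFunc.X) * y := by rw [← hy]; ring
          rw [hxx, Lpsi.smul_def, bv]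
          ring
        rw [hx]
        exact Submodule.add_mem _
          (Submodule.smul_mem _ _ (Submodule.subset_span ⟨⟨j, hjn⟩, rfl⟩))
          (ih (j + 1) (by omega) y)
  rw [Submodule.eq_top_iff']
  intro x
  have := aux n 0 (by omega) x
  rwa [pow_zero, one_mul] at this

omit hn hI in
lemma psi_unit (c : RatFunc k) (hc : c ≠ 0) : IsUnit (psi hu c) :=
  IsUnit.of_mul_eq_one (psi hu c⁻¹) (by rw [← map_mul, mul_inv_cancel₀ hc, map_one])

lemma bv_indep : LinearIndependent (RatFunc k) (bv hu (n := n)) := by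
  rw [Fintype.linearIndependent_iff]
  intro gc hgc
  by_contra hex
  push_neg at hex
  obtain ⟨i0, hi0⟩ := hex
  have H : ∃ m : ℕ, ∃ hm : m < n, gc ⟨m, hm⟩ ≠ 0 := ⟨i0, i0.isLt, hi0⟩
  classical
  set j := Nat.find H with hj
  obtain ⟨hjn, hgj⟩ := Nat.find_spec H
  have hmin : ∀ m (hm : m < n), m < j → gc ⟨m, hm⟩ = 0 := by
    intro m hm hmj
    by_contra hne
    exact Nat.find_min H hmj ⟨hm, hne⟩
  have hkey : psi hu (gc ⟨j, hjn⟩) * (mkq hu (X - C RatFunc.X)) ^ (n - 1) = 0 := by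
    have h2 : (∑ i, gc i • bv hu i) * (mkq hu (X - C RatFunc.X)) ^ (n - 1 - j) = 0 := by
      rw [hgc, zero_mul]
    rw [Finset.sum_mul] at h2
    have h3 : ∀ i : Fin n, i ∈ Finset.univ → i ≠ ⟨j, hjn⟩ →
        (gc i • bv hu i) * (mkq hu (X - C RatFunc.X)) ^ (n - 1 - j) = 0 := by
      intro i _ hne
      rcases lt_or_gt_of_ne (fun h => hne (Fin.ext h) : (i : ℕ) ≠ j) with h | h
      · rw [hmin i i.isLt h, zero_smul, zero_mul]
      · rw [Lpsi.smul_def, bv, mul_assoc, ← pow_add,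
          pow_zero_of_le hu hI ((i : ℕ) + (n - 1 - j)) (by omega), mul_zero]
    rw [Finset.sum_eq_single_of_mem ⟨j, hjn⟩ (Finset.mem_univ _) h3] at h2
    rw [Lpsi.smul_def, bv] at h2
    rw [mul_assoc, ← pow_add] at h2
    have hjj : j + (n - 1 - j) = n - 1 := by omega
    rwa [hjj] at h2
  obtain ⟨u, hum⟩ := psi_unit hu _ hgj
  rw [← hum] at hkey
  exact pow_ne_zero' hu hn hI ((Units.mul_right_eq_zero (u := u)).mp hkey)

/-- A basis of L over k(a). -/
noncomputable def bvBasis : Module.Basis (Fin n) (RatFunc k) (Lpsi hu) :=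
  Module.Basis.mk (bv_indep hu hn hI) (by rw [bv_span hu hn hI])

end Stmt1Aux

/-- Build a linear equivalence from an additive equivalence plus smul compatibility. -/
def buildEquiv {R M N : Type*} [Semiring R] [AddCommMonoid M] [AddCommMonoid N]
    [Module R M] [Module R N] (e0 : M ≃+ N)
    (h : ∀ (r : R) (x : M), e0 (r • x) = r • e0 x) : M ≃ₗ[R] N :=
  { e0 with map_smul' := h }

/-- Build a ring equivalence between endomorphism rings over two different scalar rings
acting on the same additive group, when the two linearity conditions are equivalent. -/
def buildEndEquiv {R S M : Type*} [Semiring R] [Semiring S] [AddCommMonoid M]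
    [Module R M] [Module S M]
    (h1 : ∀ (f : M →ₗ[R] M) (s : S) (x : M), f (s • x) = s • f x)
    (h2 : ∀ (f : M →ₗ[S] M) (r : R) (x : M), f (r • x) = r • f x) :
    Module.End R M ≃+* Module.End S M where
  toFun f := ⟨⟨f, f.map_add⟩, h1 f⟩
  invFun g := ⟨⟨g, g.map_add⟩, h2 g⟩
  left_inv f := rfl
  right_inv g := rfl
  map_mul' f f' := rfl
  map_add' f f' := rfl

set_option synthInstance.maxHeartbeats 1000000

theorem stmt1 (k : Type) [Field k] (n : ℕ) (hn : 1 ≤ n)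
    (I : Ideal (Polynomial (RatFunc k)))
    (hI : I = Ideal.span {(X - C RatFunc.X) ^ n}) :
    letI L := Polynomial (RatFunc k) ⧸ I
    letI φ : Polynomial k →+* Polynomial (RatFunc k) :=
      Polynomial.mapRingHom (algebraMap k (RatFunc k))
    letI : Module (Polynomial k) L := Module.compHom L φ
    Nonempty (L ≃ₗ[Polynomial k] (Fin n → RatFunc k)) ∧
    Nonempty ((Module.End (Polynomial k) L) ≃+*
        Matrix (Fin n) (Fin n) (RatFunc k)) ∧
    Module.finrank (RatFunc k) (Matrix (Fin n) (Fin n) (RatFunc k)) = n ^ 2 := by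
  have hu : UnitHyp k I := by
    intro y0
    obtain ⟨y, hy⟩ := y0
    have hy0 : y ≠ 0 := mem_nonZeroDivisors_iff_ne_zero.mp hy
    have hnd : ¬ (X - C RatFunc.X) ∣ auxφ k y := by
      rw [dvd_iff_isRoot]
      intro hr
      have h1 : eval RatFunc.X (auxφ k y) = 0 := hr
      rw [aux_eval] at h1
      exact hy0 ((map_eq_zero_iff _
        (IsFractionRing.injective (Polynomial k) (RatFunc k))).mp h1)
    have hcop : IsCoprime ((X - C RatFunc.X) ^ n) (auxφ k y) :=
      (((irreducible_X_sub_C (RatFunc.X : RatFunc k)).coprime_iff_not_dvd).mpr hnd).pow_left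
    obtain ⟨u, v, huv⟩ := hcop
    refine IsUnit.of_mul_eq_one (Ideal.Quotient.mk I v) ?_
    have hz : Ideal.Quotient.mk I (u * (X - C RatFunc.X) ^ n) = 0 := by
      rw [Ideal.Quotient.eq_zero_iff_mem, aux_mem hI]
      exact dvd_mul_left _ u
    show Ideal.Quotient.mk I (auxφ k y) * Ideal.Quotient.mk I v = 1
    calc Ideal.Quotient.mk I (auxφ k y) * Ideal.Quotient.mk I v
        = Ideal.Quotient.mk I (u * (X - C RatFunc.X) ^ n + v * auxφ k y)
          - Ideal.Quotient.mk I (u * (X - C RatFunc.X) ^ n) := by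
          rw [map_add, map_mul, map_mul]; ring
      _ = 1 := by rw [huv, hz, map_one, sub_zero]
  set B : Module.Basis (Fin n) (RatFunc k) (Lpsi hu) := bvBasis hu hn hI with hB
  set e : Lpsi hu ≃ₗ[RatFunc k] (Fin n → RatFunc k) := B.equivFun with he
  have hsmulc : ∀ (q : Polynomial k) (x : Lpsi hu),
      mkq hu (auxφ k q) * x = (algebraMap (Polynomial k) (RatFunc k) q) • x := by
    intro q x
    rw [Lpsi.smul_def, psi_alg]
  refine ⟨⟨?_⟩, ⟨?_⟩, ?_⟩
  · refine @buildEquiv (Polynomial k) (Polynomial (RatFunc k) ⧸ I) (Fin n → RatFunc k)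
      _ _ _ (Module.compHom _ (Polynomial.mapRingHom (algebraMap k (RatFunc k)))) _
      e.toAddEquiv ?_
    intro q x
    show e (mkq hu (auxφ k q) * (show Lpsi hu from x)) = q • (e (show Lpsi hu from x))
    rw [hsmulc, map_smul, algebraMap_smul]
  · refine RingEquiv.trans
      (@buildEndEquiv (Polynomial k) (RatFunc k) (Lpsi hu) _ _ _
        (Module.compHom (Lpsi hu) ((mkq hu).comp (auxφ k)) :
            Module (Polynomial k) (Lpsi hu)) _ ?_ ?_)
      (algEquivMatrix B).toRingEquiv
    · intro f c x
      show f (c • x) = c • f x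
      rw [Lpsi.smul_def, Lpsi.smul_def]
      obtain ⟨⟨num, den⟩, hd⟩ := IsLocalization.surj (M := nonZeroDivisors (Polynomial k))
        (S := RatFunc k) c
      simp only at hd
      have hfq : ∀ (q0 : Polynomial k) (z : Lpsi hu),
          f (mkq hu (auxφ k q0) * z) = mkq hu (auxφ k q0) * f z := fun q0 z => by
        letI : Module (Polynomial k) (Lpsi hu) :=
          (Module.compHom (Lpsi hu) ((mkq hu).comp (auxφ k)) :
              Module (Polynomial k) (Lpsi hu))
        exact f.map_smul' q0 z
      have hud : IsUnit (psi hu (algebraMap (Polynomial k) (RatFunc k) den)) := by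
        rw [psi_alg]; exact hu den
      have hrel : psi hu (algebraMap (Polynomial k) (RatFunc k) den) * psi hu c
          = psi hu (algebraMap (Polynomial k) (RatFunc k) num) := by
        rw [← map_mul, mul_comm, hd]
      apply hud.mul_left_cancel
      calc psi hu (algebraMap (Polynomial k) (RatFunc k) den) * f (psi hu c * x)
          = f (psi hu (algebraMap (Polynomial k) (RatFunc k) den) * (psi hu c * x)) := by
            rw [psi_alg, hfq]
        _ = f (psi hu (algebraMap (Polynomial k) (RatFunc k) num) * x) := by
            rw [← mul_assoc, hrel]
        _ = psi hu (algebraMap (Polynomial k) (RatFunc k) num) * f x := by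
            rw [psi_alg, hfq]
        _ = psi hu (algebraMap (Polynomial k) (RatFunc k) den) * (psi hu c * f x) := by
            rw [← mul_assoc, hrel]
    · intro g q x
      show g (mkq hu (auxφ k q) * x) = mkq hu (auxφ k q) * g x
      rw [hsmulc, g.map_smul, hsmulc]
  · rw [Module.finrank_matrix]
    simp [Fintype.card_fin, sq]
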